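/- On ℚ_p with the metric induced by the normalized p-adic absolute value, the 1-dimensional Hausdorff measure of ℤ_p equals 1; more generally, the 1-dimensional Hausdorff measure on ℚ_p coincides with the Haar measure normalized by μ(ℤ_p) = 1. -/

import Mathlib

open MeasureTheory Pointwise ENNReal NNReal

section Aux

variable {p : ℕ} [hp : Fact p.Prime]

lemma aux_norm_fin (a b : Fin p) (hab : a ≠ b) : ‖((a:ℚ_[p]) - (b:ℚ_[p]))‖ = 1 := by
  have h1 : ((a:ℚ_[p]) - (b:ℚ_[p])) = (((a:ℤ) - (b:ℤ) : ℤ) : ℚ_[p]) := by push_cast; ring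
  have hne : ((a:ℤ) - (b:ℤ)) ≠ 0 := by
    have : (a:ℕ) ≠ (b:ℕ) := fun h => hab (Fin.ext h)
    omega
  rw [h1]
  refine le_antisymm (Padic.norm_int_le_one _) ?_
  by_contra h
  push_neg at h
  rw [Padic.norm_intCast_lt_one_iff] at h
  have ha' := a.isLt; have hb' := b.isLt
  have habs : |(a:ℤ) - (b:ℤ)| < p := by
    rw [abs_lt]; omega
  exact hne (Int.eq_zero_of_abs_lt_dvd h habs)

lemma aux_cover (z : ℤ) :
    Metric.closedBall (0:ℚ_[p]) ((p:ℝ)^(z+1)) =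
      ⋃ a : Fin p, Metric.closedBall ((a:ℚ_[p]) * (p:ℚ_[p])^(-(z+1))) ((p:ℝ)^z) := by
  have hp1 : (1:ℝ) < p := by exact_mod_cast hp.out.one_lt
  have hpR : (p:ℝ) ≠ 0 := by positivity
  have hpQ : ((p:ℚ_[p])) ≠ 0 := by exact_mod_cast hp.out.ne_zero
  ext x
  simp only [Metric.mem_closedBall, Set.mem_iUnion, dist_eq_norm, sub_zero]
  constructor
  · intro hx
    have hu : ‖x * (p:ℚ_[p])^(z+1)‖ ≤ 1 := by
      rw [norm_mul, norm_zpow, Padic.norm_p]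
      calc ‖x‖ * ((p:ℝ)⁻¹)^(z+1) ≤ (p:ℝ)^(z+1) * ((p:ℝ)⁻¹)^(z+1) := by
            apply mul_le_mul_of_nonneg_right hx (by positivity)
        _ = 1 := by rw [← mul_zpow, mul_inv_cancel₀ hpR, one_zpow]
    set u : ℤ_[p] := ⟨x * (p:ℚ_[p])^(z+1), hu⟩ with hudef
    have ha : u.appr 1 < p := by have := PadicInt.appr_lt u 1; simpa using this
    refine ⟨⟨u.appr 1, ha⟩, ?_⟩
    have hnorm : ‖u - (u.appr 1 : ℤ_[p])‖ ≤ (p : ℝ) ^ (-(1:ℕ) : ℤ) := by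
      rw [PadicInt.norm_le_pow_iff_mem_span_pow]
      simpa using PadicInt.appr_spec 1 u
    have hxu : (u:ℚ_[p]) * (p:ℚ_[p])^(-(z+1)) = x := by
      show x * (p:ℚ_[p])^(z+1) * _ = x
      rw [mul_assoc, ← zpow_add₀ hpQ, show z + 1 + -(z+1) = 0 by ring, zpow_zero, mul_one]
    have hxe : x - (u.appr 1 : ℚ_[p]) * (p:ℚ_[p])^(-(z+1))
        = ((u:ℚ_[p]) - (u.appr 1 : ℚ_[p])) * (p:ℚ_[p])^(-(z+1)) := by
      rw [sub_mul, hxu]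
    have h2 : ‖(u:ℚ_[p]) - (u.appr 1 : ℚ_[p])‖ ≤ (p:ℝ)^(-(1:ℤ)) := by
      have hcast : ((u - (u.appr 1 : ℤ_[p]) : ℤ_[p]) : ℚ_[p]) = (u:ℚ_[p]) - (u.appr 1 : ℚ_[p]) := by
        push_cast; ring
      rw [← hcast, ← PadicInt.norm_def]
      simpa using hnorm
    rw [Fin.val_mk, hxe, norm_mul, norm_zpow, Padic.norm_p]
    calc ‖(u:ℚ_[p]) - (u.appr 1:ℚ_[p])‖ * ((p:ℝ)⁻¹)^(-(z+1))
        ≤ (p:ℝ)^(-(1:ℤ)) * ((p:ℝ)⁻¹)^(-(z+1)) := by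
          apply mul_le_mul_of_nonneg_right h2 (by positivity)
      _ = (p:ℝ)^z := by
          rw [inv_zpow, ← zpow_neg, neg_neg, ← zpow_add₀ hpR]; norm_num
  · rintro ⟨a, hax⟩
    have h1 : ‖(a:ℚ_[p]) * (p:ℚ_[p])^(-(z+1))‖ ≤ (p:ℝ)^(z+1) := by
      rw [norm_mul, norm_zpow, Padic.norm_p, inv_zpow, ← zpow_neg, neg_neg]
      have hle : ‖(a:ℚ_[p])‖ ≤ 1 := by
        have : ((a:ℚ_[p])) = (((a:ℤ)):ℚ_[p]) := by push_cast; ring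
        rw [this]; exact Padic.norm_int_le_one _
      calc ‖(a:ℚ_[p])‖ * (p:ℝ)^(z+1) ≤ 1 * (p:ℝ)^(z+1) := by
            apply mul_le_mul_of_nonneg_right hle (by positivity)
        _ = (p:ℝ)^(z+1) := one_mul _
    calc ‖x‖ = ‖(x - (a:ℚ_[p]) * (p:ℚ_[p])^(-(z+1))) + (a:ℚ_[p]) * (p:ℚ_[p])^(-(z+1))‖ := by
          ring_nf
      _ ≤ max ‖x - (a:ℚ_[p]) * (p:ℚ_[p])^(-(z+1))‖ ‖(a:ℚ_[p]) * (p:ℚ_[p])^(-(z+1))‖ :=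
          Padic.nonarchimedean _ _
      _ ≤ (p:ℝ)^(z+1) := max_le (hax.trans (zpow_le_zpow_right₀ hp1.le (by omega))) h1

lemma aux_disj (z : ℤ) : Pairwise (Function.onFun Disjoint
    (fun a : Fin p => Metric.closedBall ((a:ℚ_[p]) * (p:ℚ_[p])^(-(z+1))) ((p:ℝ)^z))) := by
  have hp1 : (1:ℝ) < p := by exact_mod_cast hp.out.one_lt
  intro a b hab
  simp only [Function.onFun, Set.disjoint_left, Metric.mem_closedBall, dist_eq_norm]
  intro x hxa hxb
  set ca := (a:ℚ_[p]) * (p:ℚ_[p])^(-(z+1))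
  set cb := (b:ℚ_[p]) * (p:ℚ_[p])^(-(z+1))
  have hcc : ‖ca - cb‖ = (p:ℝ)^(z+1) := by
    have : ca - cb = ((a:ℚ_[p]) - (b:ℚ_[p])) * (p:ℚ_[p])^(-(z+1)) := by ring
    rw [this, norm_mul, aux_norm_fin a b hab, one_mul, Padic.norm_p_zpow, neg_neg]
  have hle : ‖ca - cb‖ ≤ (p:ℝ)^z := by
    have : ca - cb = (x - cb) - (x - ca) := by ring
    rw [this]
    calc ‖(x - cb) - (x - ca)‖ ≤ max ‖x - cb‖ ‖-(x - ca)‖ := by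
          rw [sub_eq_add_neg]; exact Padic.nonarchimedean _ _
      _ ≤ (p:ℝ)^z := by rw [norm_neg]; exact max_le hxb hxa
  rw [hcc] at hle
  have : (p:ℝ)^z < (p:ℝ)^(z+1) := zpow_lt_zpow_right₀ hp1 (by omega)
  linarith

lemma aux_step [MeasurableSpace ℚ_[p]] [BorelSpace ℚ_[p]] (ν : Measure ℚ_[p])
    [ν.IsAddLeftInvariant] (z : ℤ) :
    ν (Metric.closedBall (0:ℚ_[p]) ((p:ℝ)^(z+1))) =
      p * ν (Metric.closedBall (0:ℚ_[p]) ((p:ℝ)^z)) := by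
  rw [aux_cover z, measure_iUnion (aux_disj z) (fun a => measurableSet_closedBall)]
  have h1 : ∀ a : Fin p, ν (Metric.closedBall ((a:ℚ_[p]) * (p:ℚ_[p])^(-(z+1))) ((p:ℝ)^z))
      = ν (Metric.closedBall (0:ℚ_[p]) ((p:ℝ)^z)) := by
    intro a
    have : Metric.closedBall ((a:ℚ_[p]) * (p:ℚ_[p])^(-(z+1))) ((p:ℝ)^z)
        = ((a:ℚ_[p]) * (p:ℚ_[p])^(-(z+1))) +ᵥ Metric.closedBall (0:ℚ_[p]) ((p:ℝ)^z) := by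
      rw [Metric.vadd_closedBall]; simp
    rw [this, measure_vadd]
  simp only [h1, tsum_fintype, Finset.sum_const, Finset.card_univ, Fintype.card_fin, nsmul_eq_mul]

lemma aux_ball_measure [MeasurableSpace ℚ_[p]] [BorelSpace ℚ_[p]] (ν : Measure ℚ_[p])
    [ν.IsAddLeftInvariant] (hν : ν (Metric.closedBall (0:ℚ_[p]) 1) = 1) (z : ℤ) :
    ν (Metric.closedBall (0:ℚ_[p]) ((p:ℝ)^z)) = (p:ℝ≥0∞)^z := by
  have hp0 : (p:ℝ≥0∞) ≠ 0 := by exact_mod_cast hp.out.ne_zero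
  have hptop : (p:ℝ≥0∞) ≠ ⊤ := ENNReal.natCast_ne_top p
  have Hpos : ∀ n : ℕ, ν (Metric.closedBall (0:ℚ_[p]) ((p:ℝ)^(n:ℤ))) = (p:ℝ≥0∞)^(n:ℤ) := by
    intro n
    induction n with
    | zero => simpa using hν
    | succ n ih =>
      have : ((n+1:ℕ):ℤ) = (n:ℤ) + 1 := by push_cast; ring
      rw [this, aux_step ν, ih, ENNReal.zpow_add hp0 hptop, zpow_one]
      ring
  have Hneg : ∀ n : ℕ, ν (Metric.closedBall (0:ℚ_[p]) ((p:ℝ)^(-(n:ℤ)))) = (p:ℝ≥0∞)^(-(n:ℤ)) := by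
    intro n
    induction n with
    | zero => simpa using hν
    | succ n ih =>
      have h2 : (-(n:ℤ)) = (-(n+1:ℕ):ℤ) + 1 := by push_cast; ring
      rw [h2, aux_step ν] at ih
      have h3 : (p:ℝ≥0∞)^((-(n+1:ℕ):ℤ)+1) = (p:ℝ≥0∞) * (p:ℝ≥0∞)^(-(n+1:ℕ):ℤ) := by
        rw [ENNReal.zpow_add hp0 hptop, zpow_one, mul_comm]
      rw [h3] at ih
      exact (ENNReal.mul_right_inj hp0 hptop).1 ih
  rcases z with n | n
  · exact Hpos n
  · have : (Int.negSucc n) = -((n+1:ℕ):ℤ) := by rw [Int.negSucc_eq]; push_cast; ring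
    rw [this]; exact Hneg (n+1)

lemma aux_zpow_ofReal (z : ℤ) : (p:ℝ≥0∞)^z = ENNReal.ofReal ((p:ℝ)^z) := by
  have hp0 : (0:ℝ) < p := by exact_mod_cast hp.out.pos
  have hcast : (p:ℝ≥0∞) = ENNReal.ofReal (p:ℝ) := by simp [ENNReal.ofReal_natCast]
  rcases z with n | n
  · rw [Int.ofNat_eq_coe, zpow_natCast, zpow_natCast, ENNReal.ofReal_pow hp0.le, hcast]
  · rw [zpow_negSucc, zpow_negSucc, ENNReal.ofReal_inv_of_pos (by positivity),
      ENNReal.ofReal_pow hp0.le, hcast]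

lemma aux_ball_measure' [MeasurableSpace ℚ_[p]] [BorelSpace ℚ_[p]] (μ : Measure ℚ_[p])
    [μ.IsAddLeftInvariant]
    (hball : ∀ z : ℤ, μ (Metric.closedBall (0:ℚ_[p]) ((p:ℝ)^z)) = (p:ℝ≥0∞)^z)
    (c : ℚ_[p]) (z : ℤ) : μ (Metric.closedBall c ((p:ℝ)^z)) = (p:ℝ≥0∞)^z := by
  have h : Metric.closedBall c ((p:ℝ)^z) = c +ᵥ Metric.closedBall (0:ℚ_[p]) ((p:ℝ)^z) := by
    rw [Metric.vadd_closedBall]; simp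
  rw [h, measure_vadd, hball]

lemma aux_le_hausdorff [MeasurableSpace ℚ_[p]] [BorelSpace ℚ_[p]] (μ : Measure ℚ_[p])
    [μ.IsAddLeftInvariant]
    (hball : ∀ z : ℤ, μ (Metric.closedBall (0:ℚ_[p]) ((p:ℝ)^z)) = (p:ℝ≥0∞)^z) :
    μ ≤ μH[1] := by
  have hp1 : (1:ℝ) < p := by exact_mod_cast hp.out.one_lt
  refine Measure.le_hausdorffMeasure 1 μ ∞ (by simp) (fun s _ => ?_)
  rw [ENNReal.rpow_one]
  rcases s.eq_empty_or_nonempty with rfl | ⟨x, hx⟩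
  · simp
  by_cases htop : Metric.ediam s = ∞
  · rw [htop]; exact le_top
  by_cases hzero : EMetric.diam s = 0
  · -- s is a subsingleton, measure of singleton is 0
    have hsub : s ⊆ {x} := fun y hy => (EMetric.diam_eq_zero_iff.1 hzero hy hx)
    have hone : μ {x} = 0 := by
      have hle : ∀ n : ℕ, μ {x} ≤ (p:ℝ≥0∞)^(-(n:ℤ)) := by
        intro n
        rw [← aux_ball_measure' μ hball x (-(n:ℤ))]
        exact measure_mono (Set.singleton_subset_iff.2 (Metric.mem_closedBall_self (by positivity)))
      have htend : Filter.Tendsto (fun n : ℕ => (p:ℝ≥0∞)^(-(n:ℤ))) Filter.atTop (nhds 0) := by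
        have hp0' : (p:ℝ≥0∞) ≠ 0 := by exact_mod_cast hp.out.ne_zero
        have hptop' : (p:ℝ≥0∞) ≠ ⊤ := ENNReal.natCast_ne_top p
        have heq : (fun n : ℕ => (p:ℝ≥0∞)^(-(n:ℤ))) = fun n : ℕ => ((p:ℝ≥0∞)⁻¹)^n := by
          funext n
          rw [ENNReal.zpow_neg, zpow_natCast, ← ENNReal.inv_pow]
        rw [heq]
        apply ENNReal.tendsto_pow_atTop_nhds_zero_of_lt_one
        rw [ENNReal.inv_lt_one]
        exact_mod_cast hp.out.one_lt
      have := ge_of_tendsto htend (Filter.Eventually.of_forall hle)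
      exact le_antisymm this zero_le
    calc μ s ≤ μ {x} := measure_mono hsub
      _ = 0 := hone
      _ ≤ EMetric.diam s := zero_le
  -- main case : 0 < diam < ∞
  set d := (EMetric.diam s).toReal with hd
  have hd0 : 0 < d := ENNReal.toReal_pos hzero htop
  set z := ⌊Real.logb p d⌋ with hzdef
  have hpz_le : (p:ℝ)^z ≤ d := by
    calc (p:ℝ)^z = (p:ℝ) ^ ((z:ℤ):ℝ) := (Real.rpow_intCast _ _).symm
      _ ≤ (p:ℝ) ^ (Real.logb p d) :=
          Real.rpow_le_rpow_of_exponent_le hp1.le (Int.floor_le _)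
      _ = d := Real.rpow_logb (by positivity) (ne_of_gt hp1) hd0
  have hsubball : s ⊆ Metric.closedBall x ((p:ℝ)^z) := by
    intro y hy
    rcases eq_or_ne y x with rfl | hyx
    · simp only [Metric.mem_closedBall, dist_self]; positivity
    have hdist : dist y x ≤ d := by
      have h1 : edist y x ≤ EMetric.diam s := EMetric.edist_le_diam_of_mem hy hx
      rw [hd, dist_edist]
      exact ENNReal.toReal_mono htop h1
    have hy0 : y - x ≠ 0 := sub_ne_zero.2 hyx
    have hnorm : ‖y - x‖ = (p:ℝ) ^ (-(y - x).valuation) := Padic.norm_eq_zpow_neg_valuation hy0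
    set k := -(y - x).valuation with hkdef
    have hk : (p:ℝ)^k ≤ d := by
      rw [← hnorm]; rw [dist_eq_norm] at hdist; exact hdist
    have hkz : k ≤ z := by
      rw [hzdef]
      apply Int.le_floor.2
      have h2 : Real.logb p ((p:ℝ)^k) ≤ Real.logb p d :=
        Real.logb_le_logb_of_le hp1 (by positivity) hk
      rwa [← Real.rpow_intCast, Real.logb_rpow (by positivity) (ne_of_gt hp1)] at h2
    rw [Metric.mem_closedBall, dist_eq_norm, hnorm]
    exact zpow_le_zpow_right₀ hp1.le hkz
  calc μ s ≤ μ (Metric.closedBall x ((p:ℝ)^z)) := measure_mono hsubball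
    _ = (p:ℝ≥0∞)^z := aux_ball_measure' μ hball x z
    _ = ENNReal.ofReal ((p:ℝ)^z) := aux_zpow_ofReal (p := p) z
    _ ≤ ENNReal.ofReal d := ENNReal.ofReal_le_ofReal hpz_le
    _ = EMetric.diam s := ENNReal.ofReal_toReal htop

lemma aux_diam_le (c : ℚ_[p]) (r : ℝ) (hr : 0 ≤ r) :
    EMetric.diam (Metric.closedBall c r) ≤ ENNReal.ofReal r := by
  apply EMetric.diam_le
  intro x hx y hy
  rw [Metric.mem_closedBall, dist_eq_norm] at hx hy
  rw [edist_dist]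
  apply ENNReal.ofReal_le_ofReal
  rw [dist_eq_norm]
  calc ‖x - y‖ = ‖(x - c) + -(y - c)‖ := by ring_nf
    _ ≤ max ‖x - c‖ ‖-(y - c)‖ := Padic.nonarchimedean _ _
    _ ≤ r := by rw [norm_neg]; exact max_le hx hy

lemma aux_hausdorff_le_one [MeasurableSpace ℚ_[p]] [BorelSpace ℚ_[p]] :
    μH[1] (Metric.closedBall (0:ℚ_[p]) 1) ≤ 1 := by
  have hp1 : (1:ℝ) < p := by exact_mod_cast hp.out.one_lt
  have hp0 : (p:ℝ≥0∞) ≠ 0 := by exact_mod_cast hp.out.ne_zero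
  have hptop : (p:ℝ≥0∞) ≠ ⊤ := ENNReal.natCast_ne_top p
  set t : ∀ n : ℕ, Fin (p^n) → Set ℚ_[p] :=
    fun n a => Metric.closedBall ((a:ℚ_[p])) ((p:ℝ)^(-(n:ℤ))) with ht
  have key := Measure.hausdorffMeasure_le_liminf_tsum (ι := fun n : ℕ => Fin (p^n)) 1
    (Metric.closedBall (0:ℚ_[p]) 1) (l := Filter.atTop)
    (fun n : ℕ => ENNReal.ofReal ((p:ℝ)^(-(n:ℤ)))) ?_ t ?_ ?_
  · refine key.trans ?_
    apply Filter.liminf_le_of_frequently_le'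
    apply Filter.Frequently.of_forall
    intro n
    have hsum : ∑' a : Fin (p^n), EMetric.diam (t n a) ^ (1:ℝ)
        ≤ ∑' _a : Fin (p^n), ENNReal.ofReal ((p:ℝ)^(-(n:ℤ))) := by
      apply ENNReal.tsum_le_tsum
      intro a
      rw [ENNReal.rpow_one]
      exact aux_diam_le _ _ (by positivity)
    refine hsum.trans ?_
    rw [tsum_fintype]
    simp only [Finset.sum_const, Finset.card_univ, Fintype.card_fin, nsmul_eq_mul]
    rw [← aux_zpow_ofReal (p := p) (-(n:ℤ))]
    have hcast : ((p^n : ℕ) : ℝ≥0∞) = (p:ℝ≥0∞)^(n:ℤ) := by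
      push_cast
      rw [zpow_natCast]
    rw [hcast, ← ENNReal.zpow_add hp0 hptop]
    simp
  · -- tendsto
    have heq : (fun n : ℕ => ENNReal.ofReal ((p:ℝ)^(-(n:ℤ)))) = fun n : ℕ => ((p:ℝ≥0∞)⁻¹)^n := by
      funext n
      rw [← aux_zpow_ofReal (p := p) (-(n:ℤ)), ENNReal.zpow_neg, zpow_natCast,
        ← ENNReal.inv_pow]
    rw [heq]
    apply ENNReal.tendsto_pow_atTop_nhds_zero_of_lt_one
    rw [ENNReal.inv_lt_one]
    exact_mod_cast hp.out.one_lt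
  · -- diam bounds
    apply Filter.Eventually.of_forall
    intro n a
    exact aux_diam_le _ _ (by positivity)
  · -- cover
    apply Filter.Eventually.of_forall
    intro n x hx
    rw [Metric.mem_closedBall, dist_zero_right] at hx
    set u : ℤ_[p] := ⟨x, hx⟩ with hu
    refine Set.mem_iUnion.2 ⟨⟨u.appr n, PadicInt.appr_lt u n⟩, ?_⟩
    rw [ht]
    simp only [Metric.mem_closedBall, dist_eq_norm, Fin.val_mk]
    have hnorm : ‖u - (u.appr n : ℤ_[p])‖ ≤ (p:ℝ)^(-(n:ℤ)) := by
      have := (PadicInt.norm_le_pow_iff_mem_span_pow (u - (u.appr n : ℤ_[p])) n).2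
        (PadicInt.appr_spec n u)
      simpa using this
    have hcast : ((u - (u.appr n : ℤ_[p]) : ℤ_[p]) : ℚ_[p]) = x - ((u.appr n : ℕ) : ℚ_[p]) := by
      rw [PadicInt.coe_sub, PadicInt.coe_natCast]
    rw [← hcast, ← PadicInt.norm_def]
    simpa using hnorm

end Aux

/-- On `ℚ_p` (metric from the normalized `p`-adic absolute value), the 1-dimensional
Hausdorff measure of `ℤ_p` equals `1`; more generally, the 1-dimensional Hausdorff
measure coincides with the Haar measure normalized by `μ(ℤ_p) = 1`. -/
theorem hausdorff_eq_haar_padic (p : ℕ) [Fact p.Prime]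
    [MeasurableSpace ℚ_[p]] [BorelSpace ℚ_[p]]
    (μ : Measure ℚ_[p]) [μ.IsAddHaarMeasure]
    (hμ : μ {x : ℚ_[p] | ‖x‖ ≤ 1} = 1) :
    μH[1] {x : ℚ_[p] | ‖x‖ ≤ 1} = 1 ∧ (μH[1] : Measure ℚ_[p]) = μ := by
  have hp1 : (1:ℝ) < p := by exact_mod_cast Fact.out (p := p.Prime) |>.one_lt
  have hset : {x : ℚ_[p] | ‖x‖ ≤ 1} = Metric.closedBall (0:ℚ_[p]) 1 := by
    ext x; simp [Metric.mem_closedBall, dist_zero_right]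
  rw [hset] at hμ ⊢
  -- the μ-measure of all balls
  have hμball : ∀ z : ℤ, μ (Metric.closedBall (0:ℚ_[p]) ((p:ℝ)^z)) = (p:ℝ≥0∞)^z :=
    aux_ball_measure μ hμ
  -- lower bound for the Hausdorff measure
  have hle : μ ≤ μH[1] := aux_le_hausdorff μ hμball
  -- value of the Hausdorff measure on the unit ball
  have hH1 : μH[1] (Metric.closedBall (0:ℚ_[p]) 1) = 1 := by
    refine le_antisymm aux_hausdorff_le_one ?_
    calc (1:ℝ≥0∞) = μ (Metric.closedBall (0:ℚ_[p]) 1) := hμ.symm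
      _ ≤ μH[1] (Metric.closedBall (0:ℚ_[p]) 1) := hle _
  refine ⟨hH1, ?_⟩
  -- Hausdorff measure of all balls
  have hHball : ∀ z : ℤ, μH[1] (Metric.closedBall (0:ℚ_[p]) ((p:ℝ)^z)) = (p:ℝ≥0∞)^z :=
    aux_ball_measure _ hH1
  -- the Hausdorff measure is finite on compacts
  have hfin : IsFiniteMeasureOnCompacts (μH[1] : Measure ℚ_[p]) := by
    constructor
    intro K hK
    obtain ⟨R, hR⟩ := (Metric.isBounded_iff_subset_closedBall (0:ℚ_[p])).1 hK.isBounded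
    obtain ⟨n, hn⟩ := pow_unbounded_of_one_lt R hp1
    have hsub : K ⊆ Metric.closedBall (0:ℚ_[p]) ((p:ℝ)^(n:ℤ)) := by
      refine hR.trans (Metric.closedBall_subset_closedBall ?_)
      rw [zpow_natCast]
      exact hn.le
    calc μH[1] K ≤ μH[1] (Metric.closedBall (0:ℚ_[p]) ((p:ℝ)^(n:ℤ))) := measure_mono hsub
      _ = (p:ℝ≥0∞)^(n:ℤ) := hHball n
      _ < ⊤ := by
          apply ENNReal.zpow_lt_top (by exact_mod_cast (Fact.out (p := p.Prime)).ne_zero)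
            (ENNReal.natCast_ne_top p)
  -- uniqueness of Haar measure
  have heq := Measure.isAddLeftInvariant_eq_smul (μH[1] : Measure ℚ_[p]) μ
  have hc : (Measure.addHaarScalarFactor (μH[1] : Measure ℚ_[p]) μ : ℝ≥0∞) = 1 := by
    have := congrArg (fun m : Measure ℚ_[p] => m (Metric.closedBall (0:ℚ_[p]) 1)) heq
    simp only [Measure.smul_apply] at this
    rw [hH1, hμ, ENNReal.smul_def, smul_eq_mul, mul_one] at this
    exact this.symm
  rw [heq]
  ext s hs
  rw [Measure.smul_apply, ENNReal.smul_def, hc, one_smul]
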